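/- Let Γ = F_p with p an odd prime, and for u ∈ Γ^D with D ⊆ Γ define the trace of u at index i as the 4-tuple (u_i, i·u_i, u_i², α^i·u_i). Then for any u,w ∈ Γ^D and any index i with u_i ≠ w_i, writing t = tr(u)_i − tr(w)_i (componentwise difference), we have t_value ≠ 0 and restore(t) := (t_product/t_value, (t_square + t_value²)/(2·t_value), (t_square − t_value²)/(2·t_value)) equals (i, u_i, w_i); moreover t = 0 whenever u_i = w_i. -/
import Mathlib

/-- For `Γ = F_p` with `p` an odd prime, the trace of `u` at index `i` (w.r.t. trace
parameter `α`) is the 4-tuple `(u_i, i·u_i, u_i², α^i·u_i)`.  For any `u, w` and any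
mismatch index `i` (`u_i ≠ w_i`), the componentwise trace difference `t` has
`t_value ≠ 0` and `restore(t) = (i, u_i, w_i)`; moreover `t = 0` whenever `u_i = w_i`. -/
theorem trace_restore (p : ℕ) [hp : Fact p.Prime] (hp2 : p ≠ 2) (α : ZMod p)
    (u w : ℕ → ZMod p) (i : ℕ) :
    (u i ≠ w i →
      u i - w i ≠ 0 ∧
      ((i : ZMod p) * u i - (i : ZMod p) * w i) / (u i - w i) = (i : ZMod p) ∧
      ((u i ^ 2 - w i ^ 2) + (u i - w i) ^ 2) / (2 * (u i - w i)) = u i ∧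
      ((u i ^ 2 - w i ^ 2) - (u i - w i) ^ 2) / (2 * (u i - w i)) = w i) ∧
    (u i = w i →
      u i - w i = 0 ∧
      (i : ZMod p) * u i - (i : ZMod p) * w i = 0 ∧
      u i ^ 2 - w i ^ 2 = 0 ∧
      α ^ i * u i - α ^ i * w i = 0) := by
  constructor
  · intro h
    have hd : u i - w i ≠ 0 := sub_ne_zero.mpr h
    have h2 : (2 : ZMod p) ≠ 0 := by
      intro hh
      have hdvd : p ∣ 2 := (ZMod.natCast_eq_zero_iff 2 p).mp (by exact_mod_cast hh)
      have := hp.out.two_le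
      have := Nat.le_of_dvd (by norm_num) hdvd
      omega
    refine ⟨hd, ?_, ?_, ?_⟩ <;> field_simp <;> ring
  · intro h
    simp [h]
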